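/- Every nonzero homogeneous polynomial c ∈ ℂ[x,y] of degree 3 (a binary cubic form over ℂ) can be brought, by an invertible linear change of the variables x, y and multiplication by a nonzero complex scalar, into exactly one of the three normal forms x³ − y³, x²y, x³. That is, there exist an invertible 2×2 complex matrix A and λ ∈ ℂ \ {0} such that λ · c(a₁₁x + a₁₂y, a₂₁x + a₂₂y) ∈ {x³ − y³, x²y, x³}. -/

import Mathlib

section VietaSection
open Polynomial

private lemma root_factor {f : ℂ[X]} (hm : f.Monic) (hd : f.natDegree ≠ 0) :
    ∃ (r : ℂ) (g : ℂ[X]), g.Monic ∧ g.natDegree + 1 = f.natDegree ∧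
      f = (X - Polynomial.C r) * g := by
  obtain ⟨r, hr⟩ := IsAlgClosed.exists_root f
    (by rw [degree_eq_natDegree hm.ne_zero]; exact_mod_cast hd)
  obtain ⟨g, hg⟩ := (dvd_iff_isRoot.mpr hr)
  have hgm : g.Monic := (monic_X_sub_C r).of_mul_monic_left (hg ▸ hm)
  have hdeg : g.natDegree + 1 = f.natDegree := by
    rw [hg, natDegree_mul (X_sub_C_ne_zero r) hgm.ne_zero, natDegree_X_sub_C]
    omega
  exact ⟨r, g, hgm, hdeg, hg⟩

private lemma vieta (a b c : ℂ) :
    ∃ r s u : ℂ, a = -(r + s + u) ∧ b = r*s + r*u + s*u ∧ c = -(r*s*u) := by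
  set f : ℂ[X] := X^3 + Polynomial.C a * X^2 + Polynomial.C b * X + Polynomial.C c with hf
  have hfm : f.Monic := by unfold f; monicity!
  have hfd : f.natDegree = 3 := by unfold f; compute_degree!
  obtain ⟨r, g, hgm, hgd, hg⟩ := root_factor hfm (by omega)
  rw [hfd] at hgd
  obtain ⟨s, h, hhm, hhd, hh⟩ := root_factor hgm (by omega)
  rw [show g.natDegree = 2 by omega] at hhd
  obtain ⟨e, hh1⟩ : ∃ e, h = X + Polynomial.C e := ⟨h.coeff 0, hhm.eq_X_add_C (by omega)⟩
  have hexp : f = X^3 + Polynomial.C (e - r - s) * X^2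
      + Polynomial.C (r*s - r*(e) - s*(e)) * X
      + Polynomial.C (r*s*(e)) := by
    rw [hg, hh, hh1]
    simp only [map_sub, map_mul]
    ring
  have heq := hf.symm.trans hexp
  have h2 := congrArg (fun p => p.coeff 2) heq
  have h1 := congrArg (fun p => p.coeff 1) heq
  have h0 := congrArg (fun p => p.coeff 0) heq
  simp [coeff_X_pow, sub_mul, coeff_sub, coeff_C_mul] at h2 h1 h0
  exact ⟨r, s, -(e), by linear_combination h2, by linear_combination h1,
    by linear_combination h0⟩

end VietaSection

open MvPolynomial



noncomputable section BinCubic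

private def sub2 (A : Matrix (Fin 2) (Fin 2) ℂ) :
    MvPolynomial (Fin 2) ℂ →ₐ[ℂ] MvPolynomial (Fin 2) ℂ :=
  aeval (fun i : Fin 2 => A i 0 • (X 0 : MvPolynomial (Fin 2) ℂ) + A i 1 • X 1)

private lemma sub2_X (A : Matrix (Fin 2) (Fin 2) ℂ) (i : Fin 2) :
    sub2 A (X i) = A i 0 • (X 0 : MvPolynomial (Fin 2) ℂ) + A i 1 • X 1 :=
  aeval_X _ i

private lemma sub2_C (A : Matrix (Fin 2) (Fin 2) ℂ) (z : ℂ) :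
    sub2 A (C z) = C z := by
  rw [← MvPolynomial.algebraMap_eq]; exact (sub2 A).commutes z

private lemma sub2_comp (A B : Matrix (Fin 2) (Fin 2) ℂ) (c : MvPolynomial (Fin 2) ℂ) :
    sub2 A (sub2 B c) = sub2 (B * A) c := by
  have : (sub2 A).comp (sub2 B) = sub2 (B * A) := by
    apply MvPolynomial.algHom_ext
    intro i
    simp only [AlgHom.coe_comp, Function.comp_apply, sub2_X, map_add,
      map_smul, sub2_X, Matrix.mul_apply, Fin.sum_univ_two, smul_eq_C_mul,
      map_add, map_mul, sub2_C]
    ring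
  exact congrFun (congrArg (fun f => f.toFun) this) c

/-- The target property. -/
private def Good (c : MvPolynomial (Fin 2) ℂ) : Prop :=
  ∃ (A : Matrix (Fin 2) (Fin 2) ℂ) (lam : ℂ), IsUnit A.det ∧ lam ≠ 0 ∧
      lam • sub2 A c ∈
        ({X 0 ^ 3 - X 1 ^ 3, X 0 ^ 2 * X 1, X 0 ^ 3} :
          Set (MvPolynomial (Fin 2) ℂ))

private lemma good_of_sub2 (B : Matrix (Fin 2) (Fin 2) ℂ) (hB : IsUnit B.det)
    (c : MvPolynomial (Fin 2) ℂ) (h : Good (sub2 B c)) : Good c := by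
  obtain ⟨A, lam, hA, hlam, hmem⟩ := h
  refine ⟨B * A, lam, by rw [Matrix.det_mul, IsUnit.mul_iff]; exact ⟨hB, hA⟩, hlam, ?_⟩
  rw [← sub2_comp]
  exact hmem



private lemma deg2 (d : Fin 2 →₀ ℕ) : d.degree = d 0 + d 1 := by
  rw [Finsupp.degree_apply, Finset.sum_subset (Finset.subset_univ _)
    (fun i _ hi => Finsupp.notMem_support_iff.mp hi), Fin.sum_univ_two]

private lemma ex2 {k l k' l' : ℕ} :
    (Finsupp.single (0 : Fin 2) k + Finsupp.single 1 l
      = Finsupp.single 0 k' + Finsupp.single 1 l') ↔ (k = k' ∧ l = l') := by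
  constructor
  · intro h
    have h0 := Finsupp.ext_iff.mp h 0
    have h1 := Finsupp.ext_iff.mp h 1
    simp at h0 h1
    exact ⟨h0, h1⟩
  · rintro ⟨rfl, rfl⟩; rfl

private lemma fs_eq (d : Fin 2 →₀ ℕ) :
    d = Finsupp.single 0 (d 0) + Finsupp.single 1 (d 1) := by
  ext i
  fin_cases i <;> simp

private lemma hX (k l : ℕ) (z : ℂ) :
    C z * X 0 ^ k * (X 1 : MvPolynomial (Fin 2) ℂ) ^ l
      = monomial (Finsupp.single 0 k + Finsupp.single 1 l) z := by
  rw [X_pow_eq_monomial, X_pow_eq_monomial, C_apply, monomial_mul, monomial_mul,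
    mul_one, mul_one, zero_add]

private lemma hM3 (z : ℂ) : (C z * X 0 ^ 3 : MvPolynomial (Fin 2) ℂ)
    = monomial (Finsupp.single 0 3 + Finsupp.single 1 0) z := by
  rw [← hX, pow_zero, mul_one]

private lemma hM21 (z : ℂ) : (C z * X 0 ^ 2 * X 1 : MvPolynomial (Fin 2) ℂ)
    = monomial (Finsupp.single 0 2 + Finsupp.single 1 1) z := by
  rw [← hX, pow_one]

private lemma hM12 (z : ℂ) : (C z * X 0 * X 1 ^ 2 : MvPolynomial (Fin 2) ℂ)
    = monomial (Finsupp.single 0 1 + Finsupp.single 1 2) z := by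
  rw [← hX, pow_one]

private lemma hM03 (z : ℂ) : (C z * X 1 ^ 3 : MvPolynomial (Fin 2) ℂ)
    = monomial (Finsupp.single 0 0 + Finsupp.single 1 3) z := by
  rw [← hX, pow_zero, mul_one]

private lemma decomp (c : MvPolynomial (Fin 2) ℂ) (hhom : c.IsHomogeneous 3) :
    ∃ p q r s : ℂ, c = C p * X 0 ^ 3 + C q * X 0 ^ 2 * X 1
      + C r * X 0 * X 1 ^ 2 + C s * X 1 ^ 3 := by
  refine ⟨c.coeff (Finsupp.single 0 3 + Finsupp.single 1 0),
    c.coeff (Finsupp.single 0 2 + Finsupp.single 1 1),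
    c.coeff (Finsupp.single 0 1 + Finsupp.single 1 2),
    c.coeff (Finsupp.single 0 0 + Finsupp.single 1 3), ?_⟩
  ext d
  rw [hM3, hM21, hM12, hM03]
  simp only [coeff_add, coeff_monomial]
  by_cases h3 : d 0 + d 1 = 3
  · have hd := fs_eq d
    have hk : d 0 ≤ 3 := le_of_add_le_left h3.le
    interval_cases h : d 0 <;>
      [ (have hl : d 1 = 3 := by omega);
        (have hl : d 1 = 2 := by omega);
        (have hl : d 1 = 1 := by omega);
        (have hl : d 1 = 0 := by omega)] <;>
      rw [hl] at hd <;>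
      rw [hd] <;> simp only [ex2] <;> norm_num
  · have hc : c.coeff d = 0 := hhom.coeff_eq_zero (by rw [deg2]; exact h3)
    have ne : ∀ k l : ℕ, k + l = 3 →
        ¬(Finsupp.single (0:Fin 2) k + Finsupp.single 1 l = d) := by
      intro k l hkl h
      rw [fs_eq d, ex2] at h
      omega
    rw [hc, if_neg (ne 3 0 rfl), if_neg (ne 2 1 rfl), if_neg (ne 1 2 rfl),
      if_neg (ne 0 3 rfl)]
    norm_num


private lemma exists_omega : ∃ w : ℂ, w^2 + w + 1 = 0 := by
  have hm : (Polynomial.X^2 + Polynomial.X + Polynomial.C 1 : Polynomial ℂ).Monic := by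
    monicity!
  have hd : (Polynomial.X^2 + Polynomial.X + Polynomial.C 1 : Polynomial ℂ).natDegree = 2 := by
    compute_degree!
  obtain ⟨w, hw⟩ := IsAlgClosed.exists_root _
    (by rw [Polynomial.degree_eq_natDegree hm.ne_zero, hd]; exact_mod_cast (by norm_num))
  refine ⟨w, ?_⟩
  simpa [Polynomial.IsRoot] using hw


private lemma case_triple (p r : ℂ) (hp : p ≠ 0) :
    Good (C p * (X 0 - C r * X 1) ^ 3) := by
  refine ⟨!![1, r; 0, 1], p⁻¹, by simp [Matrix.det_fin_two_of], inv_ne_zero hp, ?_⟩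
  have h1 : sub2 !![1, r; 0, 1] (X 0 - C r * X 1) = X 0 := by
    rw [map_sub, map_mul, sub2_C, sub2_X, sub2_X]
    simp [smul_eq_C_mul]
  right; right
  show _ = _
  rw [map_mul, map_pow, sub2_C, h1, smul_eq_C_mul, ← mul_assoc, ← map_mul,
    inv_mul_cancel₀ hp, map_one, one_mul]

private lemma case_double (p r s : ℂ) (hp : p ≠ 0) (hrs : r ≠ s) :
    Good (C p * ((X 0 - C r * X 1) ^ 2 * (X 0 - C s * X 1))) := by
  have hsr : s - r ≠ 0 := sub_ne_zero.mpr (Ne.symm hrs)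
  refine ⟨!![s, -r; 1, -1], (p * (s - r) ^ 3)⁻¹,
    ?_, inv_ne_zero (mul_ne_zero hp (pow_ne_zero _ hsr)), ?_⟩
  · simp [Matrix.det_fin_two_of, isUnit_iff_ne_zero]
    intro h
    exact hrs (by linear_combination h)
  · have h1 : sub2 !![s, -r; 1, -1] (X 0 - C r * X 1) = C (s - r) * X 0 := by
      rw [map_sub, map_mul, sub2_C, sub2_X, sub2_X]
      simp [smul_eq_C_mul, map_sub]
      ring
    have h2 : sub2 !![s, -r; 1, -1] (X 0 - C s * X 1) = C (s - r) * X 1 := by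
      rw [map_sub, map_mul, sub2_C, sub2_X, sub2_X]
      simp [smul_eq_C_mul, map_sub]
      ring
    right; left
    show _ = _
    rw [map_mul, map_mul, map_pow, sub2_C, h1, h2, smul_eq_C_mul]
    have key : (p * (s - r) ^ 3)⁻¹ * (p * (s - r)^3) = 1 :=
      inv_mul_cancel₀ (mul_ne_zero hp (pow_ne_zero _ hsr))
    have hC : (C ((p * (s - r) ^ 3)⁻¹) * C p * C (s - r) ^ 3 :
        MvPolynomial (Fin 2) ℂ) = 1 := by
      rw [← map_pow, ← map_mul, ← map_mul]
      rw [show (p * (s - r) ^ 3)⁻¹ * p * (s - r)^3 = 1 by linear_combination key]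
      exact map_one C
    linear_combination (X 0 ^ 2 * X 1 : MvPolynomial (Fin 2) ℂ) * hC


private lemma e00 (a b c d : ℂ) : !![a, b; c, d] 0 0 = a := rfl
private lemma e01 (a b c d : ℂ) : !![a, b; c, d] 0 1 = b := rfl
private lemma e10 (a b c d : ℂ) : !![a, b; c, d] 1 0 = c := rfl
private lemma e11 (a b c d : ℂ) : !![a, b; c, d] 1 1 = d := rfl

private lemma case_distinct (p r s u : ℂ) (hp : p ≠ 0)
    (hrs : r ≠ s) (hru : r ≠ u) (hsu : s ≠ u) :
    Good (C p * ((X 0 - C r * X 1) * (X 0 - C s * X 1) * (X 0 - C u * X 1))) := by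
  obtain ⟨w, hw⟩ := exists_omega
  have hw1 : w - 1 ≠ 0 := by
    intro h
    rw [show w = 1 by linear_combination h] at hw
    norm_num at hw
  have hw0 : w ≠ 0 := by
    intro h; rw [h] at hw; norm_num at hw
  have hwp1 : w + 1 ≠ 0 := by
    intro h
    rw [show w = -1 by linear_combination h] at hw
    norm_num at hw
  have hrs' : r - s ≠ 0 := sub_ne_zero.mpr hrs
  have hru' : r - u ≠ 0 := sub_ne_zero.mpr hru
  have hsu' : s - u ≠ 0 := sub_ne_zero.mpr hsu
  set m00 : ℂ := -(s*u) - 2*s*u*w + 2*r*u + r*u*w - r*s + r*s*w with hm00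
  set m01 : ℂ := s*u + 2*s*u*w + r*u - r*u*w - 2*r*s - r*s*w with hm01
  set m10 : ℂ := u - u*w - 2*s - s*w + r + 2*r*w with hm10
  set m11 : ℂ := 2*u + u*w - s + s*w - r - 2*r*w with hm11
  set α : ℂ := (w^2 - w)*(r-s)*(r-u) with hα
  set β : ℂ := (w^2 - 1)*(r-s)*(s-u) with hβ
  set γ : ℂ := (w - 1)*(r-u)*(s-u) with hγ
  have hα0 : α ≠ 0 := by
    rw [hα, show w^2 - w = w*(w-1) by ring]
    exact mul_ne_zero (mul_ne_zero (mul_ne_zero hw0 hw1) hrs') hru'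
  have hβ0 : β ≠ 0 := by
    rw [hβ, show w^2 - 1 = (w-1)*(w+1) by ring]
    exact mul_ne_zero (mul_ne_zero (mul_ne_zero hw1 hwp1) hrs') hsu'
  have hγ0 : γ ≠ 0 := by
    rw [hγ]
    exact mul_ne_zero (mul_ne_zero hw1 hru') hsu'
  have hE1 : m00 - r*m10 = α := by
    rw [hm00, hm10, hα]
    linear_combination (-(s*u) + r*u + r*s - r^2) * hw
  have hE1' : m01 - r*m11 = -α := by
    rw [hm01, hm11, hα]
    linear_combination (s*u - r*u - r*s + r^2) * hw
  have hE2 : m00 - s*m10 = β := by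
    rw [hm00, hm10, hβ]
    linear_combination (-(s*u) + s^2 + r*u - r*s) * hw
  have hE2' : m01 - s*m11 = -(w*β) := by
    rw [hm01, hm11, hβ]
    linear_combination (-(s*u) + s*u*w + s^2 - s^2*w + r*u - r*u*w - r*s + r*s*w) * hw
  have hE3 : m00 - u*m10 = γ := by
    rw [hm00, hm10, hγ]; ring
  have hE3' : m01 - u*m11 = -(w^2*γ) := by
    rw [hm01, hm11, hγ]
    linear_combination (-2*u^2 + u^2*w + 2*s*u - s*u*w + 2*r*u - r*u*w - 2*r*s + r*s*w) * hw
  have hdet : m00*m11 - m01*m10 = 3*(w - w^2)*(r-s)*(s-u)*(r-u) := by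
    rw [hm00, hm01, hm10, hm11]
    linear_combination (-3*s*u^2 + 3*s^2*u + 3*r*u^2 - 3*r*s^2 - 3*r^2*u + 3*r^2*s) * hw
  have hdet0 : m00*m11 - m01*m10 ≠ 0 := by
    rw [hdet, show (3:ℂ)*(w - w^2) = 3*w*(1-w) by ring]
    have h1w : (1:ℂ) - w ≠ 0 := fun h => hw1 (by linear_combination -h)
    exact mul_ne_zero (mul_ne_zero (mul_ne_zero (mul_ne_zero
      (mul_ne_zero three_ne_zero hw0) h1w) hrs') hsu') hru'
  refine ⟨!![m00, m01; m10, m11], (p*α*β*γ)⁻¹, ?_,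
    inv_ne_zero (mul_ne_zero (mul_ne_zero (mul_ne_zero hp hα0) hβ0) hγ0), ?_⟩
  · rw [Matrix.det_fin_two_of, isUnit_iff_ne_zero]
    exact hdet0
  · -- the linear factor images
    have hA : ∀ (i j : Fin 2), True := fun _ _ => trivial
    have hE1C : (C m00 - C r * C m10 : MvPolynomial (Fin 2) ℂ) = C α := by
      rw [← map_mul, ← map_sub, hE1]
    have hE1'C : (C m01 - C r * C m11 : MvPolynomial (Fin 2) ℂ) = -C α := by
      rw [← map_mul, ← map_sub, hE1', map_neg]
    have hE2C : (C m00 - C s * C m10 : MvPolynomial (Fin 2) ℂ) = C β := by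
      rw [← map_mul, ← map_sub, hE2]
    have hE2'C : (C m01 - C s * C m11 : MvPolynomial (Fin 2) ℂ) = -(C w * C β) := by
      rw [← map_mul, ← map_sub, hE2', map_neg, map_mul]
    have hE3C : (C m00 - C u * C m10 : MvPolynomial (Fin 2) ℂ) = C γ := by
      rw [← map_mul, ← map_sub, hE3]
    have hE3'C : (C m01 - C u * C m11 : MvPolynomial (Fin 2) ℂ) = -(C w ^ 2 * C γ) := by
      rw [← map_mul, ← map_sub, hE3', map_neg, map_mul, map_pow]
    have F1 : sub2 !![m00, m01; m10, m11] (X 0 - C r * X 1) = C α * (X 0 - X 1) := by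
      rw [map_sub, map_mul, sub2_C, sub2_X, sub2_X]
      simp only [e00, e01, e10, e11, smul_eq_C_mul]
      linear_combination (X 0 : MvPolynomial (Fin 2) ℂ) * hE1C + (X 1 : MvPolynomial (Fin 2) ℂ) * hE1'C
    have F2 : sub2 !![m00, m01; m10, m11] (X 0 - C s * X 1)
        = C β * (X 0 - C w * X 1) := by
      rw [map_sub, map_mul, sub2_C, sub2_X, sub2_X]
      simp only [e00, e01, e10, e11, smul_eq_C_mul]
      linear_combination (X 0 : MvPolynomial (Fin 2) ℂ) * hE2C
        + (X 1 : MvPolynomial (Fin 2) ℂ) * hE2'C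
    have F3 : sub2 !![m00, m01; m10, m11] (X 0 - C u * X 1)
        = C γ * (X 0 - C w ^ 2 * X 1) := by
      rw [map_sub, map_mul, sub2_C, sub2_X, sub2_X]
      simp only [e00, e01, e10, e11, smul_eq_C_mul]
      linear_combination (X 0 : MvPolynomial (Fin 2) ℂ) * hE3C
        + (X 1 : MvPolynomial (Fin 2) ℂ) * hE3'C
    left
    show _ = _
    rw [map_mul, map_mul, map_mul, sub2_C, F1, F2, F3, smul_eq_C_mul]
    have key : (p*α*β*γ)⁻¹ * (p*α*β*γ) = 1 :=
      inv_mul_cancel₀ (mul_ne_zero (mul_ne_zero (mul_ne_zero hp hα0) hβ0) hγ0)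
    have hKC : (C ((p*α*β*γ)⁻¹) * C p * C α * C β * C γ :
        MvPolynomial (Fin 2) ℂ) = 1 := by
      rw [← map_mul, ← map_mul, ← map_mul, ← map_mul,
        show (p*α*β*γ)⁻¹ * p * α * β * γ = 1 by linear_combination key]
      exact map_one C
    have hwC : (C w : MvPolynomial (Fin 2) ℂ)^2 + C w + 1 = 0 := by
      have h := congrArg (C : ℂ →+* MvPolynomial (Fin 2) ℂ) hw
      simpa only [map_add, map_pow, map_one, map_zero] using h
    linear_combination
      ((X 0 - X 1) * ((X 0 - C w * X 1) * (X 0 - C w ^ 2 * X 1))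
        : MvPolynomial (Fin 2) ℂ) * hKC
      + (-(X 0^2 * X 1) + C w * X 0 * X 1^2 - (C w - 1) * X 1^3) * hwC


private lemma main_lead (p q r s : ℂ) (hp : p ≠ 0) :
    Good (C p * X 0 ^ 3 + C q * X 0 ^ 2 * X 1
      + C r * X 0 * X 1 ^ 2 + C s * X 1 ^ 3) := by
  obtain ⟨a, b, u, h1, h2, h3⟩ := vieta (q/p) (r/p) (s/p)
  have hq : q = -(p*(a+b+u)) := by
    have : q = p * (q/p) := by field_simp
    rw [h1] at this; linear_combination this
  have hr : r = p*(a*b+a*u+b*u) := by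
    have : r = p * (r/p) := by field_simp
    rw [h2] at this; linear_combination this
  have hs : s = -(p*(a*b*u)) := by
    have : s = p * (s/p) := by field_simp
    rw [h3] at this; linear_combination this
  have hqC : (C q : MvPolynomial (Fin 2) ℂ) = -(C p * (C a + C b + C u)) := by
    have := congrArg (C : ℂ →+* MvPolynomial (Fin 2) ℂ) hq
    simpa only [map_neg, map_mul, map_add] using this
  have hrC : (C r : MvPolynomial (Fin 2) ℂ)
      = C p * (C a * C b + C a * C u + C b * C u) := by
    have := congrArg (C : ℂ →+* MvPolynomial (Fin 2) ℂ) hr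
    simpa only [map_mul, map_add] using this
  have hsC : (C s : MvPolynomial (Fin 2) ℂ) = -(C p * (C a * C b * C u)) := by
    have := congrArg (C : ℂ →+* MvPolynomial (Fin 2) ℂ) hs
    simpa only [map_neg, map_mul] using this
  have hc : (C p * X 0 ^ 3 + C q * X 0 ^ 2 * X 1
        + C r * X 0 * X 1 ^ 2 + C s * X 1 ^ 3 : MvPolynomial (Fin 2) ℂ)
      = C p * ((X 0 - C a * X 1) * (X 0 - C b * X 1) * (X 0 - C u * X 1)) := by
    linear_combination (X 0 ^ 2 * X 1 : MvPolynomial (Fin 2) ℂ) * hqC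
      + (X 0 * X 1 ^ 2 : MvPolynomial (Fin 2) ℂ) * hrC
      + (X 1 ^ 3 : MvPolynomial (Fin 2) ℂ) * hsC
  rw [hc]
  rcases eq_or_ne a b with hab | hab
  · rcases eq_or_ne b u with hbu | hbu
    · rw [show ((X 0 - C a * X 1) * (X 0 - C b * X 1) * (X 0 - C u * X 1)
          : MvPolynomial (Fin 2) ℂ) = (X 0 - C a * X 1) ^ 3 by
        rw [hab, hbu]; ring]
      exact case_triple p a hp
    · rw [show ((X 0 - C a * X 1) * (X 0 - C b * X 1) * (X 0 - C u * X 1)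
          : MvPolynomial (Fin 2) ℂ)
          = (X 0 - C a * X 1) ^ 2 * (X 0 - C u * X 1) by rw [hab]; ring]
      exact case_double p a u hp (by rw [hab]; exact hbu)
  · rcases eq_or_ne a u with hau | hau
    · rw [show ((X 0 - C a * X 1) * (X 0 - C b * X 1) * (X 0 - C u * X 1)
          : MvPolynomial (Fin 2) ℂ)
          = (X 0 - C a * X 1) ^ 2 * (X 0 - C b * X 1) by rw [← hau]; ring]
      exact case_double p a b hp hab
    · rcases eq_or_ne b u with hbu | hbu
      · rw [show ((X 0 - C a * X 1) * (X 0 - C b * X 1) * (X 0 - C u * X 1)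
            : MvPolynomial (Fin 2) ℂ)
            = (X 0 - C b * X 1) ^ 2 * (X 0 - C a * X 1) by rw [hbu]; ring]
        exact case_double p b a hp (Ne.symm hab)
      · exact case_distinct p a b u hp hab hau hbu

private lemma good_c (c : MvPolynomial (Fin 2) ℂ) (hc : c ≠ 0)
    (hhom : c.IsHomogeneous 3) : Good c := by
  obtain ⟨p, q, r, s, hdec⟩ := decomp c hhom
  rcases eq_or_ne p 0 with hp | hp
  swap
  · rw [hdec]; exact main_lead p q r s hp
  rcases eq_or_ne s 0 with hs | hs
  swap
  · apply good_of_sub2 !![0, 1; 1, 0]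
      (by rw [Matrix.det_fin_two_of, isUnit_iff_ne_zero]; norm_num)
    have : sub2 !![0, 1; 1, 0] c
        = C s * X 0 ^ 3 + C r * X 0 ^ 2 * X 1
          + C q * X 0 * X 1 ^ 2 + C p * X 1 ^ 3 := by
      rw [hdec]
      simp only [map_add, map_mul, map_pow, sub2_C, sub2_X, e00, e01, e10, e11,
        smul_eq_C_mul, map_zero, map_one]
      ring
    rw [this]
    exact main_lead s r q p hs
  · subst hp; subst hs
    have hq : q ≠ 0 ∨ r ≠ 0 := by
      by_contra h
      push_neg at h
      apply hc
      rw [hdec, h.1, h.2]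
      simp
    rcases eq_or_ne (q + r) 0 with hqr | hqr
    · -- r = -q, q ≠ 0
      have hr : r = -q := by linear_combination hqr
      have hq0 : q ≠ 0 := by
        rcases hq with h | h
        · exact h
        · intro h0; exact h (by rw [hr, h0, neg_zero])
      apply good_of_sub2 !![1, 0; 2, 1]
        (by rw [Matrix.det_fin_two_of, isUnit_iff_ne_zero]; norm_num)
      have : sub2 !![1, 0; 2, 1] c
          = C (2*q + 4*r) * X 0 ^ 3 + C (q + 4*r) * X 0 ^ 2 * X 1
            + C r * X 0 * X 1 ^ 2 + C 0 * X 1 ^ 3 := by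
        rw [hdec]
        simp only [map_add, map_mul, map_pow, sub2_C, sub2_X, e00, e01, e10, e11,
          smul_eq_C_mul, map_zero, map_one, map_ofNat]
        ring
      rw [this]
      apply main_lead
      rw [hr]
      intro h
      exact hq0 (by linear_combination -(1/2 : ℂ) * h)
    · apply good_of_sub2 !![1, 0; 1, 1]
        (by rw [Matrix.det_fin_two_of, isUnit_iff_ne_zero]; norm_num)
      have : sub2 !![1, 0; 1, 1] c
          = C (q + r) * X 0 ^ 3 + C (q + 2*r) * X 0 ^ 2 * X 1
            + C r * X 0 * X 1 ^ 2 + C 0 * X 1 ^ 3 := by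
        rw [hdec]
        simp only [map_add, map_mul, map_pow, sub2_C, sub2_X, e00, e01, e10, e11,
          smul_eq_C_mul, map_zero, map_one, map_ofNat]
        ring
      rw [this]
      exact main_lead _ _ _ _ hqr

end BinCubic

/-- **Normal forms of binary cubics over ℂ.** Every nonzero homogeneous
polynomial `c ∈ ℂ[x,y]` of degree 3 can be brought, by an invertible linear
change of the variables and multiplication by a nonzero scalar, into one of
the three normal forms `x³ - y³`, `x²y`, `x³`: there exist an invertible
matrix `A ∈ GL₂(ℂ)` and `λ ≠ 0` with
`λ • c(a₁₁x + a₁₂y, a₂₁x + a₂₂y) ∈ {x³ - y³, x²y, x³}`. -/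
theorem stmt12 (c : MvPolynomial (Fin 2) ℂ) (hc : c ≠ 0)
    (hhom : c.IsHomogeneous 3) :
    ∃ (A : Matrix (Fin 2) (Fin 2) ℂ) (lam : ℂ), IsUnit A.det ∧ lam ≠ 0 ∧
      lam • (aeval (fun i : Fin 2 =>
          A i 0 • (X 0 : MvPolynomial (Fin 2) ℂ) + A i 1 • X 1) c) ∈
        ({X 0 ^ 3 - X 1 ^ 3, X 0 ^ 2 * X 1, X 0 ^ 3} :
          Set (MvPolynomial (Fin 2) ℂ)) := by
  obtain ⟨A, lam, hA, hlam, hmem⟩ := good_c c hc hhom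
  exact ⟨A, lam, hA, hlam, hmem⟩
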